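/- Let 0 ≤ δ < 1/4, let (H₁, H₂, H₃) be a δ-representation of the sphere by n×n complex matrices, and let K₁, K₂, K₃ be Hermitian n×n matrices. If ‖H₁ − K₁‖ + ‖H₂ − K₂‖ + ‖H₃ − K₃‖ < √(1 − 4δ), then S(K₁,K₂,K₃) is invertible (so the Bott index of (K₁,K₂,K₃) is defined) and bott(K₁,K₂,K₃) = bott(H₁,H₂,H₃). -/

import Mathlib

open Matrix

noncomputable section

namespace AC

variable {m : Type*} [Fintype m] [DecidableEq m]

/-- The ℓ² operator norm of a complex matrix. -/
def opNorm (A : Matrix m m ℂ) : ℝ :=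
  ‖Matrix.toEuclideanCLM (𝕜 := ℂ) A‖

/-- `(H₁, H₂, H₃)` is a δ-representation of the sphere: each `Hᵣ` is Hermitian, all
commutators have ℓ²-operator norm at most `δ`, and `‖H₁² + H₂² + H₃² − I‖ ≤ δ`. -/
def IsSphereRep (δ : ℝ) (H₁ H₂ H₃ : Matrix m m ℂ) : Prop :=
  H₁.IsHermitian ∧ H₂.IsHermitian ∧ H₃.IsHermitian ∧
  opNorm (H₁ * H₂ - H₂ * H₁) ≤ δ ∧
  opNorm (H₁ * H₃ - H₃ * H₁) ≤ δ ∧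
  opNorm (H₂ * H₃ - H₃ * H₂) ≤ δ ∧
  opNorm (H₁ ^ 2 + H₂ ^ 2 + H₃ ^ 2 - 1) ≤ δ

/-- The 2n×2n Hermitian block matrix `S(H₁,H₂,H₃) = [[H₃, H₁ − iH₂], [H₁ + iH₂, −H₃]]`. -/
def sphS (H₁ H₂ H₃ : Matrix m m ℂ) : Matrix (m ⊕ m) (m ⊕ m) ℂ :=
  Matrix.fromBlocks H₃ (H₁ - Complex.I • H₂) (H₁ + Complex.I • H₂) (-H₃)

open Classical in
/-- The Bott index: the number of positive eigenvalues (with multiplicity) of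
`S(H₁,H₂,H₃)` minus `n`.  (Junk value `0` if `S(H₁,H₂,H₃)` is not Hermitian.) -/
def bott (H₁ H₂ H₃ : Matrix m m ℂ) : ℤ :=
  if h : (sphS H₁ H₂ H₃).IsHermitian then
    ((Finset.univ.filter fun i => 0 < h.eigenvalues i).card : ℤ) - Fintype.card m
  else 0

end AC

namespace ACP

open scoped Matrix.Norms.L2Operator InnerProductSpace

set_option linter.unusedSectionVars false

variable {k : Type*} [Fintype k] [DecidableEq k]

variable {k : Type*} [Fintype k] [DecidableEq k]

lemma euclid_norm_sq (y : EuclideanSpace ℂ k) : ‖y‖ ^ 2 = ∑ i, ‖y i‖ ^ 2 := by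
  rw [EuclideanSpace.norm_eq, Real.sq_sqrt (by positivity)]

lemma opNorm_le_of_blocks (M : Matrix (k ⊕ k) (k ⊕ k) ℂ) (c : ℝ) (hc : 0 ≤ c)
    (h : ∀ x : EuclideanSpace ℂ (k ⊕ k),
      ‖toEuclideanCLM (𝕜 := ℂ) M x‖ ^ 2 ≤ c ^ 2 * ‖x‖ ^ 2) :
    ‖M‖ ≤ c := by
  rw [Matrix.cstar_norm_def]
  refine ContinuousLinearMap.opNorm_le_bound _ hc fun x => ?_
  have h2 : ‖toEuclideanCLM (𝕜 := ℂ) M x‖ ^ 2 ≤ (c * ‖x‖) ^ 2 := by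
    rw [mul_pow]; exact h x
  calc ‖toEuclideanCLM (𝕜 := ℂ) M x‖
      = Real.sqrt (‖toEuclideanCLM (𝕜 := ℂ) M x‖ ^ 2) := by
        rw [Real.sqrt_sq (norm_nonneg _)]
    _ ≤ Real.sqrt ((c * ‖x‖) ^ 2) := Real.sqrt_le_sqrt h2
    _ = c * ‖x‖ := Real.sqrt_sq (by positivity)

def lpart (x : EuclideanSpace ℂ (k ⊕ k)) : EuclideanSpace ℂ k :=
  (WithLp.equiv 2 _).symm fun i => x (Sum.inl i)
def rpart (x : EuclideanSpace ℂ (k ⊕ k)) : EuclideanSpace ℂ k :=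
  (WithLp.equiv 2 _).symm fun i => x (Sum.inr i)

lemma norm_sq_split (x : EuclideanSpace ℂ (k ⊕ k)) :
    ‖x‖ ^ 2 = ‖lpart x‖ ^ 2 + ‖rpart x‖ ^ 2 := by
  simp only [euclid_norm_sq, lpart, rpart, Fintype.sum_sum_type]
  rfl

lemma mulVec_norm_sq_le (A : Matrix k k ℂ) (y : EuclideanSpace ℂ k) :
    ‖((WithLp.equiv 2 (k → ℂ)).symm (A *ᵥ ⇑y))‖ ^ 2 ≤ ‖A‖ ^ 2 * ‖y‖ ^ 2 := by
  have := Matrix.l2_opNorm_mulVec A y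
  rw [← mul_pow]
  exact pow_le_pow_left₀ (norm_nonneg _) this 2

lemma opNorm_fromBlocks_diag_le (A D : Matrix k k ℂ) :
    ‖Matrix.fromBlocks A 0 0 D‖ ≤ max ‖A‖ ‖D‖ := by
  refine opNorm_le_of_blocks _ _ (le_max_of_le_left (norm_nonneg _)) fun x => ?_
  set T := toEuclideanCLM (𝕜 := ℂ) (Matrix.fromBlocks A 0 0 D)
  have h1 : lpart (T x) = (WithLp.equiv 2 (k → ℂ)).symm (A *ᵥ ⇑(lpart x)) := by
    ext i
    show (Matrix.fromBlocks A 0 0 D *ᵥ (WithLp.equiv 2 _ x)) (Sum.inl i) = _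
    rw [Matrix.fromBlocks_mulVec]
    simp [lpart]
    rfl
  have h2 : rpart (T x) = (WithLp.equiv 2 (k → ℂ)).symm (D *ᵥ ⇑(rpart x)) := by
    ext i
    show (Matrix.fromBlocks A 0 0 D *ᵥ (WithLp.equiv 2 _ x)) (Sum.inr i) = _
    rw [Matrix.fromBlocks_mulVec]
    simp [rpart]
    rfl
  rw [norm_sq_split (T x), h1, h2, norm_sq_split x]
  calc ‖(WithLp.equiv 2 (k → ℂ)).symm (A *ᵥ ⇑(lpart x))‖ ^ 2 +
        ‖(WithLp.equiv 2 (k → ℂ)).symm (D *ᵥ ⇑(rpart x))‖ ^ 2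
      ≤ ‖A‖ ^ 2 * ‖lpart x‖ ^ 2 + ‖D‖ ^ 2 * ‖rpart x‖ ^ 2 :=
        add_le_add (mulVec_norm_sq_le A _) (mulVec_norm_sq_le D _)
    _ ≤ (max ‖A‖ ‖D‖) ^ 2 * ‖lpart x‖ ^ 2 + (max ‖A‖ ‖D‖) ^ 2 * ‖rpart x‖ ^ 2 := by
        exact add_le_add
          (mul_le_mul_of_nonneg_right
            (pow_le_pow_left₀ (norm_nonneg _) (le_max_left _ _) 2) (by positivity))
          (mul_le_mul_of_nonneg_right
            (pow_le_pow_left₀ (norm_nonneg _) (le_max_right _ _) 2) (by positivity))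
    _ = (max ‖A‖ ‖D‖) ^ 2 * (‖lpart x‖ ^ 2 + ‖rpart x‖ ^ 2) := by ring

lemma opNorm_fromBlocks_antidiag_le (B C : Matrix k k ℂ) :
    ‖Matrix.fromBlocks 0 B C 0‖ ≤ max ‖B‖ ‖C‖ := by
  refine opNorm_le_of_blocks _ _ (le_max_of_le_left (norm_nonneg _)) fun x => ?_
  set T := toEuclideanCLM (𝕜 := ℂ) (Matrix.fromBlocks 0 B C 0)
  have h1 : lpart (T x) = (WithLp.equiv 2 (k → ℂ)).symm (B *ᵥ ⇑(rpart x)) := by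
    ext i
    show (Matrix.fromBlocks 0 B C 0 *ᵥ (WithLp.equiv 2 _ x)) (Sum.inl i) = _
    rw [Matrix.fromBlocks_mulVec]
    simp [rpart]
    rfl
  have h2 : rpart (T x) = (WithLp.equiv 2 (k → ℂ)).symm (C *ᵥ ⇑(lpart x)) := by
    ext i
    show (Matrix.fromBlocks 0 B C 0 *ᵥ (WithLp.equiv 2 _ x)) (Sum.inr i) = _
    rw [Matrix.fromBlocks_mulVec]
    simp [lpart]
    rfl
  rw [norm_sq_split (T x), h1, h2, norm_sq_split x]
  calc ‖(WithLp.equiv 2 (k → ℂ)).symm (B *ᵥ ⇑(rpart x))‖ ^ 2 +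
        ‖(WithLp.equiv 2 (k → ℂ)).symm (C *ᵥ ⇑(lpart x))‖ ^ 2
      ≤ ‖B‖ ^ 2 * ‖rpart x‖ ^ 2 + ‖C‖ ^ 2 * ‖lpart x‖ ^ 2 :=
        add_le_add (mulVec_norm_sq_le B _) (mulVec_norm_sq_le C _)
    _ ≤ (max ‖B‖ ‖C‖) ^ 2 * ‖rpart x‖ ^ 2 + (max ‖B‖ ‖C‖) ^ 2 * ‖lpart x‖ ^ 2 := by
        exact add_le_add
          (mul_le_mul_of_nonneg_right
            (pow_le_pow_left₀ (norm_nonneg _) (le_max_left _ _) 2) (by positivity))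
          (mul_le_mul_of_nonneg_right
            (pow_le_pow_left₀ (norm_nonneg _) (le_max_right _ _) 2) (by positivity))
    _ = (max ‖B‖ ‖C‖) ^ 2 * (‖lpart x‖ ^ 2 + ‖rpart x‖ ^ 2) := by ring


variable {k : Type*} [Fintype k] [DecidableEq k]

lemma sphS_isHermitian {H₁ H₂ H₃ : Matrix k k ℂ} (h₁ : H₁.IsHermitian)
    (h₂ : H₂.IsHermitian) (h₃ : H₃.IsHermitian) : (AC.sphS H₁ H₂ H₃).IsHermitian := by
  unfold AC.sphS Matrix.IsHermitian
  rw [Matrix.fromBlocks_conjTranspose]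
  simp [Matrix.conjTranspose_smul, h₁.eq, h₂.eq, h₃.eq, Complex.star_def, Complex.conj_I,
    neg_smul, sub_eq_add_neg]

lemma sphS_sub (H₁ H₂ H₃ K₁ K₂ K₃ : Matrix k k ℂ) :
    AC.sphS H₁ H₂ H₃ - AC.sphS K₁ K₂ K₃ = AC.sphS (H₁ - K₁) (H₂ - K₂) (H₃ - K₃) := by
  unfold AC.sphS
  ext (i | i) (j | j) <;>
    simp [Matrix.fromBlocks, Matrix.sub_apply, Matrix.smul_apply, smul_sub] <;> ring

lemma sphS_decomp (D₁ D₂ D₃ : Matrix k k ℂ) :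
    AC.sphS D₁ D₂ D₃ = Matrix.fromBlocks D₃ 0 0 (-D₃) + Matrix.fromBlocks 0 D₁ D₁ 0 +
      Matrix.fromBlocks 0 (-(Complex.I • D₂)) (Complex.I • D₂) 0 := by
  unfold AC.sphS
  ext (i | i) (j | j) <;> simp [Matrix.fromBlocks] <;> ring

lemma opNorm_smul_I (D : Matrix k k ℂ) : ‖Complex.I • D‖ = ‖D‖ := by
  rw [norm_smul, Complex.norm_I, one_mul]

lemma opNorm_sphS_le (D₁ D₂ D₃ : Matrix k k ℂ) :
    ‖AC.sphS D₁ D₂ D₃‖ ≤ ‖D₁‖ + ‖D₂‖ + ‖D₃‖ := by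
  rw [sphS_decomp]
  calc ‖Matrix.fromBlocks D₃ 0 0 (-D₃) + Matrix.fromBlocks 0 D₁ D₁ 0 +
        Matrix.fromBlocks 0 (-(Complex.I • D₂)) (Complex.I • D₂) 0‖
      ≤ ‖Matrix.fromBlocks D₃ 0 0 (-D₃)‖ + ‖Matrix.fromBlocks 0 D₁ D₁ 0‖ +
        ‖Matrix.fromBlocks 0 (-(Complex.I • D₂)) (Complex.I • D₂) 0‖ :=
      norm_add₃_le
    _ ≤ ‖D₃‖ + ‖D₁‖ + ‖D₂‖ := by
      refine add_le_add (add_le_add ?_ ?_) ?_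
      · exact le_trans (opNorm_fromBlocks_diag_le _ _) (by simp)
      · exact le_trans (opNorm_fromBlocks_antidiag_le _ _) (by simp)
      · refine le_trans (opNorm_fromBlocks_antidiag_le _ _) ?_
        simp [opNorm_smul_I]
    _ = ‖D₁‖ + ‖D₂‖ + ‖D₃‖ := by ring

lemma sphS_sq_sub_one (H₁ H₂ H₃ : Matrix k k ℂ) :
    AC.sphS H₁ H₂ H₃ * AC.sphS H₁ H₂ H₃ - 1 =
      Matrix.fromBlocks
        ((H₁ ^ 2 + H₂ ^ 2 + H₃ ^ 2 - 1) + Complex.I • (H₁ * H₂ - H₂ * H₁)) 0 0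
        ((H₁ ^ 2 + H₂ ^ 2 + H₃ ^ 2 - 1) - Complex.I • (H₁ * H₂ - H₂ * H₁)) +
      Matrix.fromBlocks 0
        (-(H₁ * H₃ - H₃ * H₁) + Complex.I • (H₂ * H₃ - H₃ * H₂))
        ((H₁ * H₃ - H₃ * H₁) + Complex.I • (H₂ * H₃ - H₃ * H₂)) 0 := by
  unfold AC.sphS
  rw [Matrix.fromBlocks_multiply, ← Matrix.fromBlocks_one, Matrix.fromBlocks_add]
  have hsub : ∀ (a b c d a' b' c' d' : Matrix k k ℂ),
      Matrix.fromBlocks a b c d - Matrix.fromBlocks a' b' c' d' =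
      Matrix.fromBlocks (a - a') (b - b') (c - c') (d - d') := by
    intros; ext (i|i) (j|j) <;> simp [Matrix.fromBlocks]
  rw [hsub]
  have tl : H₃ * H₃ + (H₁ - Complex.I • H₂) * (H₁ + Complex.I • H₂) - 1 =
      (H₁ ^ 2 + H₂ ^ 2 + H₃ ^ 2 - 1) + Complex.I • (H₁ * H₂ - H₂ * H₁) := by
    simp only [mul_add, add_mul, sub_mul, mul_sub, smul_mul_assoc, mul_smul_comm,
      smul_smul, Complex.I_mul_I, neg_one_smul, smul_sub, smul_add, pow_two]
    abel
  have br : (H₁ + Complex.I • H₂) * (H₁ - Complex.I • H₂) + -H₃ * -H₃ - 1 =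
      (H₁ ^ 2 + H₂ ^ 2 + H₃ ^ 2 - 1) - Complex.I • (H₁ * H₂ - H₂ * H₁) := by
    simp only [mul_add, add_mul, sub_mul, mul_sub, neg_mul, mul_neg, neg_neg,
      smul_mul_assoc, mul_smul_comm, smul_smul, Complex.I_mul_I, neg_one_smul,
      smul_sub, smul_add, pow_two]
    abel
  have tr : H₃ * (H₁ - Complex.I • H₂) + (H₁ - Complex.I • H₂) * -H₃ - 0 =
      -(H₁ * H₃ - H₃ * H₁) + Complex.I • (H₂ * H₃ - H₃ * H₂) := by
    simp only [mul_add, add_mul, sub_mul, mul_sub, neg_mul, mul_neg, neg_neg, neg_sub,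
      smul_mul_assoc, mul_smul_comm, smul_sub, smul_add, sub_zero]
    module
  have bl : (H₁ + Complex.I • H₂) * H₃ + -H₃ * (H₁ + Complex.I • H₂) - 0 =
      (H₁ * H₃ - H₃ * H₁) + Complex.I • (H₂ * H₃ - H₃ * H₂) := by
    simp only [mul_add, add_mul, sub_mul, mul_sub, neg_mul, mul_neg, neg_neg, neg_sub,
      smul_mul_assoc, mul_smul_comm, smul_sub, smul_add, sub_zero]
    module
  rw [tl, br, tr, bl]
  simp


variable {k : Type*} [Fintype k] [DecidableEq k]

lemma isSelfAdjoint_CLM {A : Matrix k k ℂ} (hA : A.IsHermitian) :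
    _root_.IsSelfAdjoint (toEuclideanCLM (𝕜 := ℂ) A) := by
  have h : star A = A := by rw [Matrix.star_eq_conjTranspose, hA.eq]
  show star _ = _
  rw [← map_star, h]

lemma clm_apply_eigenvectorBasis {A : Matrix k k ℂ} (hA : A.IsHermitian) (i : k) :
    toEuclideanCLM (𝕜 := ℂ) A (hA.eigenvectorBasis i) =
      (hA.eigenvalues i : ℂ) • hA.eigenvectorBasis i := by
  have h0 : toEuclideanCLM (𝕜 := ℂ) A (hA.eigenvectorBasis i) =
      (WithLp.equiv 2 _).symm (A *ᵥ ⇑(hA.eigenvectorBasis i)) := rfl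
  rw [h0, hA.mulVec_eigenvectorBasis]
  ext j
  simp [Complex.real_smul]

lemma repr_CLM {A : Matrix k k ℂ} (hA : A.IsHermitian) (x : EuclideanSpace ℂ k) (i : k) :
    hA.eigenvectorBasis.repr (toEuclideanCLM (𝕜 := ℂ) A x) i =
      (hA.eigenvalues i : ℂ) * hA.eigenvectorBasis.repr x i := by
  rw [OrthonormalBasis.repr_apply_apply, OrthonormalBasis.repr_apply_apply]
  have := (isSelfAdjoint_CLM hA)
  calc ⟪hA.eigenvectorBasis i, toEuclideanCLM (𝕜 := ℂ) A x⟫_ℂ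
      = ⟪ContinuousLinearMap.adjoint (toEuclideanCLM (𝕜 := ℂ) A) (hA.eigenvectorBasis i), x⟫_ℂ :=
        (ContinuousLinearMap.adjoint_inner_left _ _ _).symm
    _ = ⟪toEuclideanCLM (𝕜 := ℂ) A (hA.eigenvectorBasis i), x⟫_ℂ := by
        rw [← ContinuousLinearMap.star_eq_adjoint, this.star_eq]
    _ = (hA.eigenvalues i : ℂ) * ⟪hA.eigenvectorBasis i, x⟫_ℂ := by
        rw [clm_apply_eigenvectorBasis hA i, inner_smul_left]
        simp

lemma norm_sq_repr {E : Type*} [NormedAddCommGroup E] [InnerProductSpace ℂ E]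
    (b : OrthonormalBasis k ℂ E) (x : E) :
    ‖x‖ ^ 2 = ∑ i, ‖b.repr x i‖ ^ 2 := by
  rw [← b.repr.norm_map x, EuclideanSpace.norm_eq, Real.sq_sqrt (by positivity)]

lemma re_inner_CLM {A : Matrix k k ℂ} (hA : A.IsHermitian) (x : EuclideanSpace ℂ k) :
    (⟪x, toEuclideanCLM (𝕜 := ℂ) A x⟫_ℂ).re =
      ∑ i, hA.eigenvalues i * ‖hA.eigenvectorBasis.repr x i‖ ^ 2 := by
  set b := hA.eigenvectorBasis
  have h1 : ⟪x, toEuclideanCLM (𝕜 := ℂ) A x⟫_ℂ =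
      ⟪b.repr x, b.repr (toEuclideanCLM (𝕜 := ℂ) A x)⟫_ℂ := by
    rw [b.repr.inner_map_map]
  rw [h1]
  rw [PiLp.inner_apply]
  rw [Complex.re_sum]
  refine Finset.sum_congr rfl fun i _ => ?_
  rw [repr_CLM hA x i]
  have : (hA.eigenvalues i : ℂ) * b.repr x i * (starRingEnd ℂ) (b.repr x i) =
      (hA.eigenvalues i : ℂ) * ((starRingEnd ℂ) (b.repr x i) * b.repr x i) := by ring
  rw [RCLike.inner_apply, this, Complex.conj_mul']
  rw [← Complex.ofReal_pow, ← Complex.ofReal_mul, Complex.ofReal_re]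

lemma norm_sq_CLM {A : Matrix k k ℂ} (hA : A.IsHermitian) (x : EuclideanSpace ℂ k) :
    ‖toEuclideanCLM (𝕜 := ℂ) A x‖ ^ 2 =
      ∑ i, hA.eigenvalues i ^ 2 * ‖hA.eigenvectorBasis.repr x i‖ ^ 2 := by
  rw [norm_sq_repr hA.eigenvectorBasis]
  refine Finset.sum_congr rfl fun i _ => ?_
  rw [repr_CLM hA x i, norm_mul, mul_pow, Complex.norm_real, Real.norm_eq_abs, sq_abs]

/-- eigenvalue bound from `‖A*A − 1‖ ≤ c`. -/
lemma eigenvalue_sq_ge {A : Matrix k k ℂ} (hA : A.IsHermitian) (c : ℝ)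
    (hc : ‖A * A - 1‖ ≤ c) (i : k) : 1 - c ≤ hA.eigenvalues i ^ 2 := by
  set v : EuclideanSpace ℂ k := hA.eigenvectorBasis i
  have hv1 : ‖v‖ = 1 := hA.eigenvectorBasis.orthonormal.1 i
  set lam := hA.eigenvalues i
  have hAv : toEuclideanCLM (𝕜 := ℂ) A v = (lam : ℂ) • v := clm_apply_eigenvectorBasis hA i
  have h2 : toEuclideanCLM (𝕜 := ℂ) (A * A - 1) v = ((lam ^ 2 - 1 : ℝ) : ℂ) • v := by
    rw [map_sub, _root_.map_mul, _root_.map_one]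
    simp only [ContinuousLinearMap.sub_apply, ContinuousLinearMap.mul_apply,
      ContinuousLinearMap.one_apply, hAv, _root_.map_smul, smul_smul]
    push_cast
    rw [pow_two, sub_smul, one_smul]
  have h3 : ‖toEuclideanCLM (𝕜 := ℂ) (A * A - 1) v‖ ≤ c := by
    have h5 := ContinuousLinearMap.le_opNorm (toEuclideanCLM (𝕜 := ℂ) (A * A - 1)) v
    rw [hv1, mul_one, ← Matrix.cstar_norm_def] at h5
    exact h5.trans hc
  rw [h2, norm_smul, hv1, mul_one] at h3
  have h4 : |lam ^ 2 - 1| ≤ c := by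
    rwa [Complex.norm_real, Real.norm_eq_abs] at h3
  have := abs_le.mp h4
  linarith [this.1]

/-- coordinates vanish off the spanning index set. -/
lemma repr_eq_zero_of_mem_span (b : OrthonormalBasis k ℂ (EuclideanSpace ℂ k)) (s : Finset k)
    {x : EuclideanSpace ℂ k}
    (hx : x ∈ Submodule.span ℂ ((fun j => b j) '' (s : Set k))) {i : k} (hi : i ∉ s) :
    b.repr x i = 0 := by
  induction hx using Submodule.span_induction with
  | mem y hy =>
    obtain ⟨j, hj, rfl⟩ := hy
    rw [b.repr_self, EuclideanSpace.single_apply, if_neg]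
    rintro rfl
    exact hi hj
  | zero => simp
  | add y z _ _ hy hz =>
    rw [map_add]
    show b.repr y i + b.repr z i = 0
    rw [hy, hz, add_zero]
  | smul c y _ hy =>
    rw [_root_.map_smul]
    show c • b.repr y i = 0
    rw [hy, smul_zero]


lemma quad_ge {A : Matrix k k ℂ} (hA : A.IsHermitian) (s : Finset k) (c : ℝ)
    (hs : ∀ i ∈ s, c ≤ hA.eigenvalues i) {x : EuclideanSpace ℂ k}
    (hx : x ∈ Submodule.span ℂ ((fun j => hA.eigenvectorBasis j) '' (s : Set k))) :
    c * ‖x‖ ^ 2 ≤ (⟪x, toEuclideanCLM (𝕜 := ℂ) A x⟫_ℂ).re := by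
  have hz : ∀ i ∉ s, hA.eigenvectorBasis.repr x i = 0 :=
    fun i hi => repr_eq_zero_of_mem_span _ s hx hi
  rw [re_inner_CLM hA, norm_sq_repr hA.eigenvectorBasis]
  rw [← Finset.sum_subset (Finset.subset_univ s)
    (fun i _ hi => by rw [hz i hi]; simp : ∀ i ∈ Finset.univ, i ∉ s →
      hA.eigenvalues i * ‖hA.eigenvectorBasis.repr x i‖ ^ 2 = 0)]
  rw [← Finset.sum_subset (Finset.subset_univ s)
    (fun i _ hi => by rw [hz i hi]; simp : ∀ i ∈ Finset.univ, i ∉ s →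
      ‖hA.eigenvectorBasis.repr x i‖ ^ 2 = 0)]
  rw [Finset.mul_sum]
  exact Finset.sum_le_sum fun i hi => mul_le_mul_of_nonneg_right (hs i hi) (by positivity)

lemma quad_le {A : Matrix k k ℂ} (hA : A.IsHermitian) (s : Finset k) (c : ℝ)
    (hs : ∀ i ∈ s, hA.eigenvalues i ≤ c) {x : EuclideanSpace ℂ k}
    (hx : x ∈ Submodule.span ℂ ((fun j => hA.eigenvectorBasis j) '' (s : Set k))) :
    (⟪x, toEuclideanCLM (𝕜 := ℂ) A x⟫_ℂ).re ≤ c * ‖x‖ ^ 2 := by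
  have hz : ∀ i ∉ s, hA.eigenvectorBasis.repr x i = 0 :=
    fun i hi => repr_eq_zero_of_mem_span _ s hx hi
  rw [re_inner_CLM hA, norm_sq_repr hA.eigenvectorBasis]
  rw [← Finset.sum_subset (Finset.subset_univ s)
    (fun i _ hi => by rw [hz i hi]; simp : ∀ i ∈ Finset.univ, i ∉ s →
      hA.eigenvalues i * ‖hA.eigenvectorBasis.repr x i‖ ^ 2 = 0)]
  rw [← Finset.sum_subset (Finset.subset_univ s)
    (fun i _ hi => by rw [hz i hi]; simp : ∀ i ∈ Finset.univ, i ∉ s →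
      ‖hA.eigenvectorBasis.repr x i‖ ^ 2 = 0)]
  rw [Finset.mul_sum]
  exact Finset.sum_le_sum fun i hi => mul_le_mul_of_nonneg_right (hs i hi) (by positivity)

lemma finrank_span_eigenvectors {A : Matrix k k ℂ} (hA : A.IsHermitian) (s : Finset k) :
    Module.finrank ℂ
      (Submodule.span ℂ ((fun j => hA.eigenvectorBasis j) '' (s : Set k))) = s.card := by
  have ho : Orthonormal ℂ (fun j : s => hA.eigenvectorBasis j) :=
    hA.eigenvectorBasis.orthonormal.comp _ Subtype.val_injective
  have him : ((fun j => hA.eigenvectorBasis j) '' (s : Set k)) =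
      Set.range (fun j : s => hA.eigenvectorBasis j) := Set.image_eq_range _ _
  rw [him, finrank_span_eq_card ho.linearIndependent, Fintype.card_coe]

lemma exists_common_vec {A B : Matrix k k ℂ} (hA : A.IsHermitian) (hB : B.IsHermitian)
    (s t : Finset k) (hcard : Fintype.card k < s.card + t.card) :
    ∃ x : EuclideanSpace ℂ k, x ≠ 0 ∧
      x ∈ Submodule.span ℂ ((fun j => hA.eigenvectorBasis j) '' (s : Set k)) ∧
      x ∈ Submodule.span ℂ ((fun j => hB.eigenvectorBasis j) '' (t : Set k)) := by
  set U := Submodule.span ℂ ((fun j => hA.eigenvectorBasis j) '' (s : Set k))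
  set W := Submodule.span ℂ ((fun j => hB.eigenvectorBasis j) '' (t : Set k))
  have hU : Module.finrank ℂ U = s.card := finrank_span_eigenvectors hA s
  have hW : Module.finrank ℂ W = t.card := finrank_span_eigenvectors hB t
  have hsum := Submodule.finrank_sup_add_finrank_inf_eq U W
  have hle : Module.finrank ℂ ↥(U ⊔ W) ≤ Fintype.card k := by
    have := Submodule.finrank_le (U ⊔ W)
    rwa [finrank_euclideanSpace] at this
  have hpos : 0 < Module.finrank ℂ ↥(U ⊓ W) := by omega
  have hne : U ⊓ W ≠ ⊥ := by
    intro h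
    rw [h, finrank_bot] at hpos
    exact lt_irrefl 0 hpos
  obtain ⟨x, hx, hx0⟩ := Submodule.exists_mem_ne_zero_of_ne_bot hne
  exact ⟨x, hx0, hx.1, hx.2⟩

lemma re_inner_sub_le {A B : Matrix k k ℂ} (x : EuclideanSpace ℂ k) :
    (⟪x, toEuclideanCLM (𝕜 := ℂ) A x⟫_ℂ).re - (⟪x, toEuclideanCLM (𝕜 := ℂ) B x⟫_ℂ).re ≤
      ‖A - B‖ * ‖x‖ ^ 2 := by
  have h1 : (⟪x, toEuclideanCLM (𝕜 := ℂ) A x⟫_ℂ).re - (⟪x, toEuclideanCLM (𝕜 := ℂ) B x⟫_ℂ).re =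
      (⟪x, toEuclideanCLM (𝕜 := ℂ) (A - B) x⟫_ℂ).re := by
    rw [map_sub]
    rw [ContinuousLinearMap.sub_apply, inner_sub_right]
    simp
  rw [h1]
  calc (⟪x, toEuclideanCLM (𝕜 := ℂ) (A - B) x⟫_ℂ).re
      ≤ ‖⟪x, toEuclideanCLM (𝕜 := ℂ) (A - B) x⟫_ℂ‖ := Complex.re_le_norm _
    _ ≤ ‖x‖ * ‖toEuclideanCLM (𝕜 := ℂ) (A - B) x‖ := by
        exact norm_inner_le_norm _ _
    _ ≤ ‖x‖ * (‖A - B‖ * ‖x‖) := by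
        refine mul_le_mul_of_nonneg_left ?_ (norm_nonneg _)
        have := ContinuousLinearMap.le_opNorm (toEuclideanCLM (𝕜 := ℂ) (A - B)) x
        rwa [← Matrix.cstar_norm_def] at this
    _ = ‖A - B‖ * ‖x‖ ^ 2 := by ring

lemma key_contra {A B : Matrix k k ℂ} (hA : A.IsHermitian) (hB : B.IsHermitian)
    {g : ℝ} (hg : 0 < g) (hAB : ‖A - B‖ < g) (s t : Finset k)
    (hs : ∀ i ∈ s, g ≤ hA.eigenvalues i) (ht : ∀ j ∈ t, hB.eigenvalues j ≤ 0) :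
    s.card + t.card ≤ Fintype.card k := by
  by_contra hlt
  push_neg at hlt
  obtain ⟨x, hx0, hxU, hxW⟩ := exists_common_vec hA hB s t hlt
  have hxpos : 0 < ‖x‖ ^ 2 := pow_pos (norm_pos_iff.mpr hx0) 2
  have h1 : g * ‖x‖ ^ 2 ≤ (⟪x, toEuclideanCLM (𝕜 := ℂ) A x⟫_ℂ).re := quad_ge hA s g hs hxU
  have h2 : (⟪x, toEuclideanCLM (𝕜 := ℂ) B x⟫_ℂ).re ≤ 0 := by
    have := quad_le hB t 0 ht hxW
    simpa using this
  have h3 := re_inner_sub_le (A := A) (B := B) x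
  have h4 : ‖A - B‖ * ‖x‖ ^ 2 < g * ‖x‖ ^ 2 := mul_lt_mul_of_pos_right hAB hxpos
  linarith

lemma key_contra' {A B : Matrix k k ℂ} (hA : A.IsHermitian) (hB : B.IsHermitian)
    {g : ℝ} (hg : 0 < g) (hAB : ‖A - B‖ < g) (s t : Finset k)
    (hs : ∀ i ∈ s, hA.eigenvalues i ≤ -g) (ht : ∀ j ∈ t, 0 ≤ hB.eigenvalues j) :
    s.card + t.card ≤ Fintype.card k := by
  by_contra hlt
  push_neg at hlt
  obtain ⟨x, hx0, hxU, hxW⟩ := exists_common_vec hA hB s t hlt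
  have hxpos : 0 < ‖x‖ ^ 2 := pow_pos (norm_pos_iff.mpr hx0) 2
  have h1 : (⟪x, toEuclideanCLM (𝕜 := ℂ) A x⟫_ℂ).re ≤ -g * ‖x‖ ^ 2 := quad_le hA s (-g) hs hxU
  have h2 : 0 ≤ (⟪x, toEuclideanCLM (𝕜 := ℂ) B x⟫_ℂ).re := by
    have := quad_ge hB t 0 ht hxW
    simpa using this
  have h3 := re_inner_sub_le (A := B) (B := A) x
  have h4 : ‖B - A‖ * ‖x‖ ^ 2 < g * ‖x‖ ^ 2 := by
    rw [norm_sub_rev]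
    exact mul_lt_mul_of_pos_right hAB hxpos
  linarith


lemma abs_eigen_ge {A : Matrix k k ℂ} (hA : A.IsHermitian) {g : ℝ} (hg : 0 ≤ g)
    (hgap : ∀ i, g ^ 2 ≤ hA.eigenvalues i ^ 2) (i : k) : g ≤ |hA.eigenvalues i| := by
  have := Real.sqrt_le_sqrt (hgap i)
  rwa [Real.sqrt_sq hg, Real.sqrt_sq_eq_abs] at this

lemma isUnit_of_gap {A B : Matrix k k ℂ} (hA : A.IsHermitian) {g : ℝ} (hg : 0 < g)
    (hgap : ∀ i, g ^ 2 ≤ hA.eigenvalues i ^ 2) (hAB : ‖A - B‖ < g) : IsUnit B := by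
  rw [Matrix.isUnit_iff_isUnit_det, isUnit_iff_ne_zero]
  intro hdet
  obtain ⟨v, hv0, hv⟩ := (Matrix.exists_mulVec_eq_zero_iff).mpr hdet
  set x : EuclideanSpace ℂ k := (WithLp.equiv 2 (k → ℂ)).symm v with hxdef
  have hx0 : x ≠ 0 := by
    intro h
    apply hv0
    have := congrArg (WithLp.equiv 2 (k → ℂ)) h
    simpa [hxdef] using this
  have hBx : toEuclideanCLM (𝕜 := ℂ) B x = 0 := by
    have h0 : toEuclideanCLM (𝕜 := ℂ) B x = (WithLp.equiv 2 (k → ℂ)).symm (B *ᵥ v) := rfl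
    rw [h0, hv]
    rfl
  have hAx : (g * ‖x‖) ^ 2 ≤ ‖toEuclideanCLM (𝕜 := ℂ) A x‖ ^ 2 := by
    rw [norm_sq_CLM hA, mul_pow, norm_sq_repr hA.eigenvectorBasis, Finset.mul_sum]
    refine Finset.sum_le_sum fun i _ => mul_le_mul_of_nonneg_right (hgap i) (by positivity)
  have hAx' : g * ‖x‖ ≤ ‖toEuclideanCLM (𝕜 := ℂ) A x‖ := by
    have h5 := Real.sqrt_le_sqrt hAx
    rwa [Real.sqrt_sq (by positivity), Real.sqrt_sq (norm_nonneg _)] at h5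
  have hup : ‖toEuclideanCLM (𝕜 := ℂ) A x‖ ≤ ‖A - B‖ * ‖x‖ := by
    have h6 : toEuclideanCLM (𝕜 := ℂ) A x = toEuclideanCLM (𝕜 := ℂ) (A - B) x := by
      rw [map_sub, ContinuousLinearMap.sub_apply, hBx, sub_zero]
    rw [h6]
    have := ContinuousLinearMap.le_opNorm (toEuclideanCLM (𝕜 := ℂ) (A - B)) x
    rwa [← Matrix.cstar_norm_def] at this
  have hxn : 0 < ‖x‖ := norm_pos_iff.mpr hx0
  have : ‖A - B‖ * ‖x‖ < g * ‖x‖ := mul_lt_mul_of_pos_right hAB hxn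
  linarith

open Classical in
lemma card_pos_eigen_eq {A B : Matrix k k ℂ} (hA : A.IsHermitian) (hB : B.IsHermitian)
    {g : ℝ} (hg : 0 < g) (hgap : ∀ i, g ^ 2 ≤ hA.eigenvalues i ^ 2) (hAB : ‖A - B‖ < g) :
    (Finset.univ.filter fun i => 0 < hB.eigenvalues i).card =
      (Finset.univ.filter fun i => 0 < hA.eigenvalues i).card := by
  have habs := abs_eigen_ge hA hg.le hgap
  have hcardA := Finset.card_filter_add_card_filter_not
    (s := (Finset.univ : Finset k)) (p := fun i => 0 < hA.eigenvalues i)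
  have hcardB := Finset.card_filter_add_card_filter_not
    (s := (Finset.univ : Finset k)) (p := fun i => 0 < hB.eigenvalues i)
  rw [Finset.card_univ] at hcardA hcardB
  apply le_antisymm
  · -- q ≤ p  via key_contra'
    have h := key_contra' hA hB hg hAB
      (Finset.univ.filter fun i => ¬ 0 < hA.eigenvalues i)
      (Finset.univ.filter fun i => 0 < hB.eigenvalues i)
      (fun i hi => by
        have hi' : ¬ 0 < hA.eigenvalues i := (Finset.mem_filter.mp hi).2
        have h1 : hA.eigenvalues i ≤ 0 := le_of_not_gt hi'
        have h2 := habs i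
        rw [abs_of_nonpos h1] at h2
        linarith)
      (fun j hj => (le_of_lt (Finset.mem_filter.mp hj).2))
    omega
  · -- p ≤ q  via key_contra
    have h := key_contra hA hB hg hAB
      (Finset.univ.filter fun i => 0 < hA.eigenvalues i)
      (Finset.univ.filter fun j => ¬ 0 < hB.eigenvalues j)
      (fun i hi => by
        have hi' : 0 < hA.eigenvalues i := (Finset.mem_filter.mp hi).2
        have h2 := habs i
        rw [abs_of_pos hi'] at h2
        exact h2)
      (fun j hj => le_of_not_gt (Finset.mem_filter.mp hj).2)
    omega

end ACP

open scoped Matrix.Norms.L2Operator in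
theorem bott_stable {n : ℕ} (δ : ℝ) (hδ0 : 0 ≤ δ) (hδ : δ < 1/4)
    (H₁ H₂ H₃ K₁ K₂ K₃ : Matrix (Fin n) (Fin n) ℂ)
    (hrep : AC.IsSphereRep δ H₁ H₂ H₃)
    (hK₁ : K₁.IsHermitian) (hK₂ : K₂.IsHermitian) (hK₃ : K₃.IsHermitian)
    (hclose : AC.opNorm (H₁ - K₁) + AC.opNorm (H₂ - K₂) + AC.opNorm (H₃ - K₃) <
      Real.sqrt (1 - 4 * δ)) :
    IsUnit (AC.sphS K₁ K₂ K₃) ∧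
    AC.bott K₁ K₂ K₃ = AC.bott H₁ H₂ H₃ := by
  obtain ⟨h1, h2, h3, c12, c13, c23, hsq⟩ := hrep
  have hAC : ∀ (X : Matrix (Fin n) (Fin n) ℂ), AC.opNorm X = ‖X‖ := fun _ => rfl
  rw [hAC] at c12 c13 c23 hsq
  rw [hAC, hAC, hAC] at hclose
  set g := Real.sqrt (1 - 4 * δ) with hgdef
  have h14 : (0:ℝ) < 1 - 4 * δ := by linarith
  have hg : 0 < g := Real.sqrt_pos.mpr h14
  have hgsq : g ^ 2 = 1 - 4 * δ := Real.sq_sqrt h14.le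
  have hSH : (AC.sphS H₁ H₂ H₃).IsHermitian := ACP.sphS_isHermitian h1 h2 h3
  have hSK : (AC.sphS K₁ K₂ K₃).IsHermitian := ACP.sphS_isHermitian hK₁ hK₂ hK₃
  have hsq4 : ‖AC.sphS H₁ H₂ H₃ * AC.sphS H₁ H₂ H₃ - 1‖ ≤ 4 * δ := by
    rw [ACP.sphS_sq_sub_one]
    refine le_trans (norm_add_le _ _) ?_
    have e1 := ACP.opNorm_fromBlocks_diag_le
      ((H₁ ^ 2 + H₂ ^ 2 + H₃ ^ 2 - 1) + Complex.I • (H₁ * H₂ - H₂ * H₁))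
      ((H₁ ^ 2 + H₂ ^ 2 + H₃ ^ 2 - 1) - Complex.I • (H₁ * H₂ - H₂ * H₁))
    have e2 := ACP.opNorm_fromBlocks_antidiag_le
      (-(H₁ * H₃ - H₃ * H₁) + Complex.I • (H₂ * H₃ - H₃ * H₂))
      ((H₁ * H₃ - H₃ * H₁) + Complex.I • (H₂ * H₃ - H₃ * H₂))
    have b1 : ‖(H₁ ^ 2 + H₂ ^ 2 + H₃ ^ 2 - 1) + Complex.I • (H₁ * H₂ - H₂ * H₁)‖ ≤ 2 * δ := by
      refine le_trans (norm_add_le _ _) ?_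
      rw [ACP.opNorm_smul_I]
      linarith
    have b2 : ‖(H₁ ^ 2 + H₂ ^ 2 + H₃ ^ 2 - 1) - Complex.I • (H₁ * H₂ - H₂ * H₁)‖ ≤ 2 * δ := by
      refine le_trans (norm_sub_le _ _) ?_
      rw [ACP.opNorm_smul_I]
      linarith
    have b3 : ‖-(H₁ * H₃ - H₃ * H₁) + Complex.I • (H₂ * H₃ - H₃ * H₂)‖ ≤ 2 * δ := by
      refine le_trans (norm_add_le _ _) ?_
      rw [ACP.opNorm_smul_I, norm_neg]
      linarith
    have b4 : ‖(H₁ * H₃ - H₃ * H₁) + Complex.I • (H₂ * H₃ - H₃ * H₂)‖ ≤ 2 * δ := by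
      refine le_trans (norm_add_le _ _) ?_
      rw [ACP.opNorm_smul_I]
      linarith
    have m1 := le_trans e1 (max_le b1 b2)
    have m2 := le_trans e2 (max_le b3 b4)
    linarith
  have hgap : ∀ i, g ^ 2 ≤ hSH.eigenvalues i ^ 2 := by
    intro i
    have := ACP.eigenvalue_sq_ge hSH (4 * δ) hsq4 i
    rw [hgsq]
    linarith
  have hclose' : ‖AC.sphS H₁ H₂ H₃ - AC.sphS K₁ K₂ K₃‖ < g := by
    rw [ACP.sphS_sub]
    exact lt_of_le_of_lt (ACP.opNorm_sphS_le _ _ _) hclose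
  refine ⟨ACP.isUnit_of_gap hSH hg hgap hclose', ?_⟩
  have hcount := ACP.card_pos_eigen_eq hSH hSK hg hgap hclose'
  rw [AC.bott, AC.bott, dif_pos hSK, dif_pos hSH]
  congr 1
  exact congrArg _ hcount
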